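/- Let CL be a conic-line arrangement of n lines and k conics in ℂP² with only ordinary singularities, t_{n+k} = 0, and n + k ≥ 4. Suppose all n lines pass through a common point p_1. Then the Levi graph H of CL has an induced cycle of length 6. -/

import Mathlib

open MvPolynomial

/-- The Levi graph of an arrangement of curves `C : ι → Set P` with singular points `S`:
the bipartite incidence graph between singular points and curves. -/
def leviGraph {P ι : Type*} (C : ι → Set P) (S : Finset P) :
    SimpleGraph ({p // p ∈ S} ⊕ ι) :=
  SimpleGraph.fromRel (fun u v => ∃ (p : {p // p ∈ S}) (i : ι),
    u = Sum.inl p ∧ v = Sum.inr i ∧ (p : P) ∈ C i)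

lemma leviGraph_adj_inl_inr {P ι : Type*} (C : ι → Set P) (S : Finset P)
    (p : {p // p ∈ S}) (i : ι) :
    (leviGraph C S).Adj (Sum.inl p) (Sum.inr i) ↔ (p : P) ∈ C i := by
  simp [leviGraph, SimpleGraph.fromRel_adj]

lemma leviGraph_adj_inr_inl {P ι : Type*} (C : ι → Set P) (S : Finset P)
    (p : {p // p ∈ S}) (i : ι) :
    (leviGraph C S).Adj (Sum.inr i) (Sum.inl p) ↔ (p : P) ∈ C i := by
  rw [SimpleGraph.adj_comm]; exact leviGraph_adj_inl_inr C S p i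

lemma leviGraph_not_adj_inl_inl {P ι : Type*} (C : ι → Set P) (S : Finset P)
    (p q : {p // p ∈ S}) : ¬ (leviGraph C S).Adj (Sum.inl p) (Sum.inl q) := by
  simp [leviGraph, SimpleGraph.fromRel_adj]

lemma leviGraph_not_adj_inr_inr {P ι : Type*} (C : ι → Set P) (S : Finset P)
    (i j : ι) : ¬ (leviGraph C S).Adj (Sum.inr i) (Sum.inr j) := by
  simp [leviGraph, SimpleGraph.fromRel_adj]

lemma build_C6 {P ι : Type*} (C : ι → Set P) (S : Finset P)
    (a b c : ι) (hab : a ≠ b) (hac : a ≠ c) (hbc : b ≠ c)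
    (q r s : P) (hq : q ∈ S) (hr : r ∈ S) (hs : s ∈ S)
    (hqa : q ∈ C a) (hqb : q ∈ C b) (hqc : q ∉ C c)
    (hra : r ∈ C a) (hrc : r ∈ C c) (hrb : r ∉ C b)
    (hsb : s ∈ C b) (hsc : s ∈ C c) (hsa : s ∉ C a) :
    Nonempty (SimpleGraph.cycleGraph 6 ↪g leviGraph C S) := by
  have hqr : q ≠ r := fun h => hrb (h ▸ hqb)
  have hqs : q ≠ s := fun h => hsa (h ▸ hqa)
  have hrs : r ≠ s := fun h => hsa (h ▸ hra)
  let f : Fin 6 → ({p // p ∈ S} ⊕ ι) := fun i => match i with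
    | 0 => Sum.inl ⟨q, hq⟩
    | 1 => Sum.inr a
    | 2 => Sum.inl ⟨r, hr⟩
    | 3 => Sum.inr c
    | 4 => Sum.inl ⟨s, hs⟩
    | 5 => Sum.inr b
  refine ⟨⟨⟨f, ?_⟩, ?_⟩⟩
  · intro u v huv
    fin_cases u <;> fin_cases v <;>
      simp_all [f, Sum.inl.injEq, Sum.inr.injEq, Subtype.ext_iff]
  · intro u v
    show (leviGraph C S).Adj (f u) (f v) ↔ (SimpleGraph.cycleGraph 6).Adj u v
    fin_cases u <;> fin_cases v <;>
      simp [f, leviGraph_adj_inl_inr, leviGraph_adj_inr_inl,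
        leviGraph_not_adj_inl_inl, leviGraph_not_adj_inr_inr,
        SimpleGraph.cycleGraph_adj, hqa, hqb, hqc, hra, hrc, hrb, hsb, hsc, hsa] <;> decide

theorem leviGraph_conic_line_concurrent_lines_induced_C6 {P : Type*} {n k : ℕ}
    (hnk : 4 ≤ n + k) (L : Fin n → Set P) (Q : Fin k → Set P) (S : Finset P)
    (hS : ∀ p : P, p ∈ S ↔ ∃ a b : Fin n ⊕ Fin k, a ≠ b ∧
        p ∈ Sum.elim L Q a ∧ p ∈ Sum.elim L Q b)
    (hLL : ∀ i j : Fin n, i ≠ j → (L i ∩ L j).ncard = 1)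
    (hLQ : ∀ (i : Fin n) (j : Fin k), (L i ∩ Q j).ncard = 2)
    (hQQ : ∀ i j : Fin k, i ≠ j → (Q i ∩ Q j).ncard = 4)
    (p₁ : P) (hp₁ : ∀ i : Fin n, p₁ ∈ L i)
    (htop : ¬ ∃ p : P, (∀ i : Fin n, p ∈ L i) ∧ ∀ j : Fin k, p ∈ Q j) :
    Nonempty (SimpleGraph.cycleGraph 6 ↪g leviGraph (Sum.elim L Q) S) := by
  push_neg at htop
  have hmem : ∀ (p : P) (a b : Fin n ⊕ Fin k), a ≠ b → p ∈ Sum.elim L Q a →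
      p ∈ Sum.elim L Q b → p ∈ S := fun p a b h h1 h2 => (hS p).2 ⟨a, b, h, h1, h2⟩
  have hLQfin : ∀ (i : Fin n) (j : Fin k), (L i ∩ Q j).Finite := fun i j =>
    Set.finite_of_ncard_ne_zero (by rw [hLQ i j]; norm_num)
  have hLQne : ∀ (i : Fin n) (j : Fin k), (L i ∩ Q j).Nonempty := fun i j =>
    Set.nonempty_of_ncard_ne_zero (by rw [hLQ i j]; norm_num)
  rcases Nat.lt_or_ge n 2 with hn | hn
  · -- n ≤ 1
    interval_cases n
    · -- n = 0 : k ≥ 4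
      have hk : 4 ≤ k := by omega
      have h3 : ∃ i j m : Fin k, i ≠ j ∧ i ≠ m ∧ j ≠ m ∧ ∃ x, x ∈ Q i ∩ Q j ∧ x ∉ Q m := by
        by_contra hcon
        push_neg at hcon
        have h01 : (⟨0, by omega⟩ : Fin k) ≠ ⟨1, by omega⟩ := by simp [Fin.ext_iff]
        obtain ⟨x, hx⟩ := Set.nonempty_of_ncard_ne_zero
          (s := Q ⟨0, by omega⟩ ∩ Q ⟨1, by omega⟩) (by rw [hQQ _ _ h01]; norm_num)
        obtain ⟨m, hm⟩ := htop x (fun i => i.elim0)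
        refine hm ?_
        by_cases hm0 : m = ⟨0, by omega⟩
        · exact hm0 ▸ hx.1
        by_cases hm1 : m = ⟨1, by omega⟩
        · exact hm1 ▸ hx.2
        exact hcon _ _ m h01 (Ne.symm hm0) (Ne.symm hm1) x hx
      obtain ⟨i, j, m, hij, him, hjm, x, hx, hxm⟩ := h3
      have hfin : ∀ a b : Fin k, a ≠ b → (Q a ∩ Q b).Finite := fun a b h =>
        Set.finite_of_ncard_ne_zero (by rw [hQQ a b h]; norm_num)
      have hr : ∃ r, r ∈ Q i ∩ Q m ∧ r ∉ Q j := by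
        by_contra hcon; push_neg at hcon
        have hsub : Q i ∩ Q m ⊆ Q i ∩ Q j := fun y hy => ⟨hy.1, hcon y hy⟩
        have heq := Set.eq_of_subset_of_ncard_le hsub
          (by rw [hQQ i j hij, hQQ i m him]) (hfin i j hij)
        exact hxm (heq.symm.subset hx).2
      have hs' : ∃ s, s ∈ Q j ∩ Q m ∧ s ∉ Q i := by
        by_contra hcon; push_neg at hcon
        have hsub : Q j ∩ Q m ⊆ Q i ∩ Q j := fun y hy => ⟨hcon y hy, hy.1⟩
        have heq := Set.eq_of_subset_of_ncard_le hsub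
          (by rw [hQQ i j hij, hQQ j m hjm]) (hfin i j hij)
        exact hxm (heq.symm.subset hx).2
      obtain ⟨r, hr, hrj⟩ := hr
      obtain ⟨s, hs', hsi⟩ := hs'
      exact build_C6 (Sum.elim L Q) S (Sum.inr i) (Sum.inr j) (Sum.inr m)
        (by simp [hij]) (by simp [him]) (by simp [hjm]) x r s
        (hmem x (Sum.inr i) (Sum.inr j) (by simp [hij]) hx.1 hx.2)
        (hmem r (Sum.inr i) (Sum.inr m) (by simp [him]) hr.1 hr.2)
        (hmem s (Sum.inr j) (Sum.inr m) (by simp [hjm]) hs'.1 hs'.2)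
        hx.1 hx.2 hxm hr.1 hr.2 hrj hs'.1 hs'.2 hsi
    · -- n = 1 : k ≥ 3
      have hk : 3 ≤ k := by omega
      have h3 : ∃ i j : Fin k, i ≠ j ∧ ∃ x, x ∈ L 0 ∩ Q i ∧ x ∉ Q j := by
        by_contra hcon
        push_neg at hcon
        obtain ⟨x, hx⟩ := hLQne 0 ⟨0, by omega⟩
        obtain ⟨m, hm⟩ := htop x (fun i => by rw [Fin.fin_one_eq_zero i]; exact hx.1)
        refine hm ?_
        by_cases hm0 : m = ⟨0, by omega⟩
        · exact hm0 ▸ hx.2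
        · exact hcon _ m (Ne.symm hm0) x hx
      obtain ⟨i, j, hij, x, hx, hxj⟩ := h3
      have hr : ∃ r, r ∈ L 0 ∩ Q j ∧ r ∉ Q i := by
        by_contra hcon; push_neg at hcon
        have hsub : L 0 ∩ Q j ⊆ L 0 ∩ Q i := fun y hy => ⟨hy.1, hcon y hy⟩
        have heq := Set.eq_of_subset_of_ncard_le hsub
          (by rw [hLQ 0 i, hLQ 0 j]) (hLQfin 0 i)
        exact hxj (heq.symm.subset hx).2
      have hs' : ∃ s, s ∈ Q i ∩ Q j ∧ s ∉ L 0 := by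
        by_contra hcon; push_neg at hcon
        have hsub : Q i ∩ Q j ⊆ L 0 ∩ Q i := fun y hy => ⟨hcon y hy, hy.1⟩
        have := Set.ncard_le_ncard hsub (hLQfin 0 i)
        rw [hQQ i j hij, hLQ 0 i] at this
        omega
      obtain ⟨r, hr, hri⟩ := hr
      obtain ⟨s, hs', hsl⟩ := hs'
      exact build_C6 (Sum.elim L Q) S (Sum.inl 0) (Sum.inr i) (Sum.inr j)
        (by simp) (by simp) (by simp [hij]) x r s
        (hmem x (Sum.inl 0) (Sum.inr i) (by simp) hx.1 hx.2)
        (hmem r (Sum.inl 0) (Sum.inr j) (by simp) hr.1 hr.2)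
        (hmem s (Sum.inr i) (Sum.inr j) (by simp [hij]) hs'.1 hs'.2)
        hx.1 hx.2 hxj hr.1 hr.2 hri hs'.1 hs'.2 hsl
  · -- n ≥ 2
    obtain ⟨j, hj⟩ := htop p₁ hp₁
    set i0 : Fin n := ⟨0, by omega⟩
    set i1 : Fin n := ⟨1, by omega⟩
    have hi01 : i0 ≠ i1 := by simp [i0, i1, Fin.ext_iff]
    have hLLsing : L i0 ∩ L i1 = {p₁} := by
      obtain ⟨a, ha⟩ := Set.ncard_eq_one.1 (hLL i0 i1 hi01)
      have : p₁ ∈ L i0 ∩ L i1 := ⟨hp₁ i0, hp₁ i1⟩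
      rw [ha] at this ⊢
      simp_all
    obtain ⟨q, hq⟩ := hLQne i0 j
    obtain ⟨r, hr⟩ := hLQne i1 j
    have hq1 : q ∉ L i1 := fun h => hj (by
      have : q ∈ L i0 ∩ L i1 := ⟨hq.1, h⟩
      rw [hLLsing] at this
      exact this ▸ hq.2)
    have hr0 : r ∉ L i0 := fun h => hj (by
      have : r ∈ L i0 ∩ L i1 := ⟨h, hr.1⟩
      rw [hLLsing] at this
      exact this ▸ hr.2)
    exact build_C6 (Sum.elim L Q) S (Sum.inl i0) (Sum.inl i1) (Sum.inr j)
      (by simp [hi01]) (by simp) (by simp) p₁ q r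
      (hmem p₁ (Sum.inl i0) (Sum.inl i1) (by simp [hi01]) (hp₁ i0) (hp₁ i1))
      (hmem q (Sum.inl i0) (Sum.inr j) (by simp) hq.1 hq.2)
      (hmem r (Sum.inl i1) (Sum.inr j) (by simp) hr.1 hr.2)
      (hp₁ i0) (hp₁ i1) hj hq.1 hq.2 hq1 hr.1 hr.2 hr0
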